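/- Let p ∈ (0,1) and let D_p be the depolarizing channel on M_d(ℂ). Then for all density matrices ρ, σ on ℂ^d: D(D_p(ρ)‖D_p(σ)) ≤ ((1−p)² / (1 − ((d−1)/d)p)) · D(ρ‖σ) (an inequality in [0,∞]). In particular the strong data processing (contraction) coefficient of D_p for relative entropy is at most (1−p)²/(1 − ((d−1)/d)p), which is strictly less than 1−p. -/

import Mathlib

open scoped Matrix ENNReal ComplexOrder

noncomputable section

namespace RDPI

/-- A density matrix: positive semidefinite with trace one. -/
def IsDensity {d : ℕ} (ρ : Matrix (Fin d) (Fin d) ℂ) : Prop :=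
  ρ.PosSemidef ∧ ρ.trace = 1

/-- The support (column space / range) of a matrix. -/
def supp {d : ℕ} (ρ : Matrix (Fin d) (Fin d) ℂ) : Submodule ℂ (Fin d → ℂ) :=
  LinearMap.range ρ.mulVecLin

/-- The Choi matrix `∑ᵢⱼ Eᵢⱼ ⊗ N(Eᵢⱼ)` of a linear map between matrix algebras. -/
def choi {dA dB : ℕ} (N : Matrix (Fin dA) (Fin dA) ℂ →ₗ[ℂ] Matrix (Fin dB) (Fin dB) ℂ) :
    Matrix (Fin dA × Fin dB) (Fin dA × Fin dB) ℂ :=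
  fun p q => N (Matrix.single p.1 q.1 1) p.2 q.2

/-- A quantum channel: completely positive (PSD Choi matrix) and trace preserving. -/
def IsQChannel {dA dB : ℕ}
    (N : Matrix (Fin dA) (Fin dA) ℂ →ₗ[ℂ] Matrix (Fin dB) (Fin dB) ℂ) : Prop :=
  (choi N).PosSemidef ∧ ∀ ρ, (N ρ).trace = ρ.trace

/-- Functional-calculus logarithm of a Hermitian matrix, taken on its support
(recall `Real.log 0 = 0`). Junk value `0` for non-Hermitian inputs. -/
def matLog {d : ℕ} (A : Matrix (Fin d) (Fin d) ℂ) : Matrix (Fin d) (Fin d) ℂ :=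
  if hA : A.IsHermitian then
    (hA.eigenvectorUnitary : Matrix (Fin d) (Fin d) ℂ) *
      Matrix.diagonal (fun i => (Real.log (hA.eigenvalues i) : ℂ)) *
      star (hA.eigenvectorUnitary : Matrix (Fin d) (Fin d) ℂ)
  else 0

open scoped Classical in
/-- Quantum relative entropy `D(ρ‖σ)`, valued in `[0,∞]`. -/
def relEnt {d : ℕ} (ρ σ : Matrix (Fin d) (Fin d) ℂ) : ℝ≥0∞ :=
  if supp ρ ≤ supp σ then ENNReal.ofReal ((ρ * (matLog ρ - matLog σ)).trace.re) else ⊤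

/-- The BKM metric `g_σ(X) = ∫₀^∞ Tr(X† (σ+r)⁻¹ X (σ+r)⁻¹) dr`, valued in `[0,∞]`. -/
def bkm {d : ℕ} (σ X : Matrix (Fin d) (Fin d) ℂ) : ℝ≥0∞ :=
  ∫⁻ r in Set.Ioi (0 : ℝ),
    ENNReal.ofReal ((Xᴴ * (σ + (r : ℂ) • 1)⁻¹ * X * (σ + (r : ℂ) • 1)⁻¹).trace.re)

/-- The depolarizing channel `D_p(ρ) = (1-p)ρ + (p/d) Tr(ρ) I`. -/
def depol (d : ℕ) (p : ℝ) (ρ : Matrix (Fin d) (Fin d) ℂ) : Matrix (Fin d) (Fin d) ℂ :=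
  ((1 - p : ℝ) : ℂ) • ρ + ((p / d : ℝ) : ℂ) • ρ.trace • (1 : Matrix (Fin d) (Fin d) ℂ)


-- ### Auxiliary lemmas ### --

/-- `φ(a,b) = a log a − a log b − a + b` (with `Real.log 0 = 0` convention). -/
def phi (a b : ℝ) : ℝ := a * Real.log a - a * Real.log b - a + b

lemma phi_self (a : ℝ) : phi a a = 0 := by simp [phi]

/-- derivative of the gap function -/
def Dfun (q s c b : ℝ) (x : ℝ) : ℝ :=
  c * (Real.log x - Real.log b) - q * (Real.log (q * x + s) - Real.log (q * b + s))

def Gfun (q s c b : ℝ) (x : ℝ) : ℝ :=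
  c * phi x b - phi (q * x + s) (q * b + s)

lemma hasDerivAt_G {q s : ℝ} (hq : 0 < q) (hs : 0 < s) (c b : ℝ) {x : ℝ} (hx : 0 < x) :
    HasDerivAt (Gfun q s c b) (Dfun q s c b x) x := by
  have hqs : q * x + s ≠ 0 := by positivity
  have haff : HasDerivAt (fun y : ℝ => q * y + s) q x := by
    simpa using ((hasDerivAt_id x).const_mul q).add_const s
  have h1 : HasDerivAt (fun y : ℝ => y * Real.log y) (Real.log x + 1) x :=
    Real.hasDerivAt_mul_log hx.ne'
  have h2 : HasDerivAt (fun y : ℝ => (q * y + s) * Real.log (q * y + s))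
      ((Real.log (q * x + s) + 1) * q) x := by
    have := (Real.hasDerivAt_mul_log hqs).comp x haff; exact this
  have h3 : HasDerivAt (fun y : ℝ => y * Real.log b) (1 * Real.log b) x :=
    (hasDerivAt_id x).mul_const _
  have h4 : HasDerivAt (fun y : ℝ => (q * y + s) * Real.log (q * b + s))
      (q * Real.log (q * b + s)) x := by
    simpa using haff.mul_const (Real.log (q * b + s))
  have H : HasDerivAt (Gfun q s c b)
      (c * ((Real.log x + 1) - 1 * Real.log b - 1 + 0) -
        ((Real.log (q * x + s) + 1) * q - q * Real.log (q * b + s) - q + 0)) x := by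
    unfold Gfun phi
    exact ((((h1.sub h3).sub (hasDerivAt_id x)).add (hasDerivAt_const x b)).const_mul c).sub
      (((h2.sub h4).sub haff).add (hasDerivAt_const x (q * b + s)))
  convert H using 1
  unfold Dfun; ring

lemma hasDerivAt_D {q s : ℝ} (hq : 0 < q) (hs : 0 < s) (c b : ℝ) {x : ℝ} (hx : 0 < x) :
    HasDerivAt (Dfun q s c b) (c / x - q * (q / (q * x + s))) x := by
  have hqs : q * x + s ≠ 0 := by positivity
  have haff : HasDerivAt (fun y : ℝ => q * y + s) q x := by
    simpa using ((hasDerivAt_id x).const_mul q).add_const s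
  have h1 : HasDerivAt (fun y : ℝ => Real.log y - Real.log b) (x⁻¹ - 0) x :=
    (Real.hasDerivAt_log hx.ne').sub (hasDerivAt_const x _)
  have h2 : HasDerivAt (fun y : ℝ => Real.log (q * y + s) - Real.log (q * b + s))
      ((q * x + s)⁻¹ * q - 0) x :=
    by have := (((Real.hasDerivAt_log hqs).comp x haff)).sub
         (hasDerivAt_const x (Real.log (q * b + s))); exact this
  have H := (h1.const_mul c).sub (h2.const_mul q)
  rw [show c / x - q * (q / (q * x + s)) = c * (x⁻¹ - 0) - q * ((q * x + s)⁻¹ * q - 0) by ring]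
  exact H

/-- The central scalar inequality. -/
lemma scalar_sdpi {q s : ℝ} (hq : 0 < q) (hs : 0 < s) {a b : ℝ} (ha0 : 0 ≤ a) (ha1 : a ≤ 1)
    (hb0 : 0 < b) (hb1 : b ≤ 1) :
    phi (q * a + s) (q * b + s) ≤ q ^ 2 / (q + s) * phi a b := by
  set c := q ^ 2 / (q + s) with hc
  have hqs : 0 < q + s := by positivity
  -- D is monotone on (0,1]
  have hDderiv : ∀ x ∈ Set.Ioo (0:ℝ) 1, 0 ≤ deriv (Dfun q s c b) x := by
    intro x hx
    rw [(hasDerivAt_D hq hs c b hx.1).deriv, sub_nonneg, hc, div_div]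
    have heq : q * (q / (q * x + s)) = q ^ 2 / (q * x + s) := by
      field_simp
    obtain ⟨hx0, hx1⟩ := hx
    have hden1 : (0:ℝ) < q * x + s := by positivity
    have hden2 : (0:ℝ) < (q + s) * x := by positivity
    rw [heq, div_le_div_iff₀ hden1 hden2]
    nlinarith [mul_nonneg (mul_nonneg (sq_nonneg q) hs.le) (sub_nonneg.mpr hx1.le)]
  have hDcont : ContinuousOn (Dfun q s c b) (Set.Ioc (0:ℝ) 1) := by
    intro x hx
    exact ((hasDerivAt_D hq hs c b hx.1).continuousAt).continuousWithinAt
  have hDdiff : DifferentiableOn ℝ (Dfun q s c b) (interior (Set.Ioc (0:ℝ) 1)) := by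
    rw [interior_Ioc]
    intro x hx
    exact ((hasDerivAt_D hq hs c b hx.1).differentiableAt).differentiableWithinAt
  have hDmono : MonotoneOn (Dfun q s c b) (Set.Ioc (0:ℝ) 1) := by
    refine monotoneOn_of_deriv_nonneg (convex_Ioc 0 1) hDcont hDdiff ?_
    rw [interior_Ioc]; exact hDderiv
  have hDb : Dfun q s c b b = 0 := by unfold Dfun; ring
  -- G is continuous
  have hGcont : Continuous (Gfun q s c b) := by
    unfold Gfun phi
    have hml : Continuous fun x : ℝ => x * Real.log x := Real.continuous_mul_log
    have haff : Continuous fun x : ℝ => q * x + s := by continuity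
    fun_prop (disch := first | exact hml.comp haff | exact hml | continuity)
  have hGb : Gfun q s c b b = 0 := by
    unfold Gfun; rw [phi_self, phi_self]; ring
  have key : 0 ≤ Gfun q s c b a := by
    rcases le_total a b with hab | hab
    · have hanti : AntitoneOn (Gfun q s c b) (Set.Icc 0 b) := by
        refine antitoneOn_of_deriv_nonpos (convex_Icc 0 b) hGcont.continuousOn ?_ ?_
        · rw [interior_Icc]
          exact fun x hx => ((hasDerivAt_G hq hs c b hx.1).differentiableAt).differentiableWithinAt
        · rw [interior_Icc]
          intro x hx
          rw [(hasDerivAt_G hq hs c b hx.1).deriv]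
          have := hDmono (Set.mem_Ioc.mpr ⟨hx.1, le_trans hx.2.le hb1⟩)
            (Set.mem_Ioc.mpr ⟨hb0, hb1⟩) hx.2.le
          linarith [hDb ▸ this]
      have := hanti (Set.mem_Icc.mpr ⟨ha0, hab⟩) (Set.mem_Icc.mpr ⟨hb0.le, le_refl b⟩) hab
      linarith [hGb ▸ this]
    · have hmono : MonotoneOn (Gfun q s c b) (Set.Icc b 1) := by
        refine monotoneOn_of_deriv_nonneg (convex_Icc b 1) hGcont.continuousOn ?_ ?_
        · rw [interior_Icc]
          exact fun x hx =>
            ((hasDerivAt_G hq hs c b (lt_trans hb0 hx.1)).differentiableAt).differentiableWithinAt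
        · rw [interior_Icc]
          intro x hx
          rw [(hasDerivAt_G hq hs c b (lt_trans hb0 hx.1)).deriv]
          have := hDmono (Set.mem_Ioc.mpr ⟨hb0, hb1⟩)
            (Set.mem_Ioc.mpr ⟨lt_trans hb0 hx.1, hx.2.le⟩) hx.1.le
          linarith [hDb ▸ this]
      have := hmono (Set.mem_Icc.mpr ⟨le_refl b, hb1⟩) (Set.mem_Icc.mpr ⟨hab, ha1⟩) hab
      linarith [hGb ▸ this]
  unfold Gfun at key
  linarith

open Matrix in
lemma aeval_diagonal {d : ℕ} (x : Fin d → ℂ) (P : Polynomial ℂ) :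
    Polynomial.aeval (Matrix.diagonal x) P = Matrix.diagonal (fun i => P.eval (x i)) := by
  induction P using Polynomial.induction_on' with
  | add p q hp hq =>
      rw [map_add, hp, hq]
      ext i j
      by_cases h : i = j <;> simp [h, Matrix.diagonal_apply, Polynomial.eval_add]
  | monomial n a =>
      rw [Polynomial.aeval_monomial, Matrix.diagonal_pow, Algebra.algebraMap_eq_smul_one,
        smul_mul_assoc, one_mul]
      ext i j
      by_cases h : i = j <;>
        simp [h, Matrix.diagonal_apply, Polynomial.eval_monomial, Pi.pow_apply]

open Matrix in
lemma conj_pow {d : ℕ} {u : Matrix (Fin d) (Fin d) ℂ} (hu : star u * u = 1)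
    (hu' : u * star u = 1) (A : Matrix (Fin d) (Fin d) ℂ) (n : ℕ) :
    (u * A * star u) ^ n = u * A ^ n * star u := by
  induction n with
  | zero => simp [hu']
  | succ n ih =>
      rw [pow_succ, ih, pow_succ]
      calc u * A ^ n * star u * (u * A * star u)
          = u * A ^ n * (star u * u) * A * star u := by noncomm_ring
        _ = u * (A ^ n * A) * star u := by rw [hu]; noncomm_ring

open Matrix in
lemma aeval_conj {d : ℕ} {u : Matrix (Fin d) (Fin d) ℂ} (hu : star u * u = 1)
    (hu' : u * star u = 1) (A : Matrix (Fin d) (Fin d) ℂ) (P : Polynomial ℂ) :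
    Polynomial.aeval (u * A * star u) P = u * Polynomial.aeval A P * star u := by
  induction P using Polynomial.induction_on' with
  | add p q hp hq => rw [map_add, hp, hq, map_add]; noncomm_ring
  | monomial n a =>
      rw [Polynomial.aeval_monomial, Polynomial.aeval_monomial, conj_pow hu hu',
        Algebra.algebraMap_eq_smul_one, smul_mul_assoc, one_mul, smul_mul_assoc,
        Matrix.mul_smul, smul_mul_assoc, one_mul]

open Matrix in
/-- Well-definedness of the functional calculus across two unitary diagonalizations. -/
lemma conj_diag_eq {d : ℕ} {u v : Matrix (Fin d) (Fin d) ℂ}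
    (hu : star u * u = 1) (hu' : u * star u = 1)
    (hv : star v * v = 1) (hv' : v * star v = 1)
    (f e : Fin d → ℝ) (g : ℝ → ℝ)
    (h : u * Matrix.diagonal (fun i => (f i : ℂ)) * star u
       = v * Matrix.diagonal (fun i => (e i : ℂ)) * star v) :
    u * Matrix.diagonal (fun i => (g (f i) : ℂ)) * star u
       = v * Matrix.diagonal (fun i => (g (e i) : ℂ)) * star v := by
  classical
  set nodes : Finset ℂ :=
    (Finset.univ.image fun i => ((f i : ℂ))) ∪ (Finset.univ.image fun i => ((e i : ℂ))) with hn
  set P : Polynomial ℂ := Lagrange.interpolate nodes id (fun z => (g z.re : ℂ)) with hP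
  have keyP : ∀ z : ℂ, z ∈ nodes → P.eval z = (g z.re : ℂ) := by
    intro z hz
    have := Lagrange.eval_interpolate_at_node (s := nodes) (v := id)
      (fun z => (g z.re : ℂ)) (Set.injOn_id _) hz
    exact this
  have hf : ∀ i, P.eval ((f i : ℂ)) = (g (f i) : ℂ) := by
    intro i
    rw [keyP _ (Finset.mem_union_left _ (Finset.mem_image_of_mem _ (Finset.mem_univ i)))]
    norm_num
  have he : ∀ i, P.eval ((e i : ℂ)) = (g (e i) : ℂ) := by
    intro i
    rw [keyP _ (Finset.mem_union_right _ (Finset.mem_image_of_mem _ (Finset.mem_univ i)))]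
    norm_num
  calc u * Matrix.diagonal (fun i => (g (f i) : ℂ)) * star u
      = u * Matrix.diagonal (fun i => P.eval ((f i : ℂ))) * star u := by
        congr 1; congr 1; exact congrArg _ (funext fun i => (hf i).symm)
    _ = Polynomial.aeval (u * Matrix.diagonal (fun i => (f i : ℂ)) * star u) P := by
        rw [aeval_conj hu hu', aeval_diagonal]
    _ = Polynomial.aeval (v * Matrix.diagonal (fun i => (e i : ℂ)) * star v) P := by rw [h]
    _ = v * Matrix.diagonal (fun i => P.eval ((e i : ℂ))) * star v := by
        rw [aeval_conj hv hv', aeval_diagonal]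
    _ = _ := by
        congr 1; congr 1; exact congrArg _ (funext fun i => he i)

open Matrix in
lemma isHermitian_conj_diag {d : ℕ} {u : Matrix (Fin d) (Fin d) ℂ} (f : Fin d → ℝ) :
    (u * Matrix.diagonal (fun i => (f i : ℂ)) * star u).IsHermitian := by
  have h : (Matrix.diagonal (fun i => (f i : ℂ))).IsHermitian := by
    rw [Matrix.IsHermitian, Matrix.diagonal_conjTranspose]
    ext i j
    by_cases hij : i = j <;> simp [hij, Matrix.diagonal_apply]
  rw [Matrix.star_eq_conjTranspose]
  exact Matrix.isHermitian_mul_mul_conjTranspose u h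

open Matrix in
lemma matLog_conj_diag {d : ℕ} {u : Matrix (Fin d) (Fin d) ℂ}
    (hu : star u * u = 1) (hu' : u * star u = 1) (f : Fin d → ℝ) :
    matLog (u * Matrix.diagonal (fun i => (f i : ℂ)) * star u)
      = u * Matrix.diagonal (fun i => (Real.log (f i) : ℂ)) * star u := by
  set A := u * Matrix.diagonal (fun i => (f i : ℂ)) * star u with hA
  have hH : A.IsHermitian := isHermitian_conj_diag f
  rw [matLog, dif_pos hH]
  have hspec : (hH.eigenvectorUnitary : Matrix (Fin d) (Fin d) ℂ) *
      Matrix.diagonal (fun i => ((hH.eigenvalues i : ℝ) : ℂ)) *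
      star (hH.eigenvectorUnitary : Matrix (Fin d) (Fin d) ℂ) = A := hH.spectral_theorem.symm
  have h1 : star (hH.eigenvectorUnitary : Matrix (Fin d) (Fin d) ℂ) *
      (hH.eigenvectorUnitary : Matrix (Fin d) (Fin d) ℂ) = 1 :=
    Matrix.mem_unitaryGroup_iff'.mp (hH.eigenvectorUnitary).2
  have h1' : (hH.eigenvectorUnitary : Matrix (Fin d) (Fin d) ℂ) *
      star (hH.eigenvectorUnitary : Matrix (Fin d) (Fin d) ℂ) = 1 :=
    Matrix.mem_unitaryGroup_iff.mp (hH.eigenvectorUnitary).2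
  exact conj_diag_eq h1 h1' hu hu' hH.eigenvalues f Real.log (hspec.trans hA)

open Matrix in
lemma trace_conj_diag_same {d : ℕ} {u : Matrix (Fin d) (Fin d) ℂ}
    (hu : star u * u = 1) (x y : Fin d → ℝ) :
    ((u * Matrix.diagonal (fun i => (x i : ℂ)) * star u) *
     (u * Matrix.diagonal (fun i => (y i : ℂ)) * star u)).trace
      = ((∑ i, x i * y i : ℝ) : ℂ) := by
  have h : (u * Matrix.diagonal (fun i => (x i : ℂ)) * star u) *
      (u * Matrix.diagonal (fun i => (y i : ℂ)) * star u)
      = u * (Matrix.diagonal (fun i => (x i : ℂ)) * Matrix.diagonal (fun i => (y i : ℂ)))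
        * star u := by
    calc (u * Matrix.diagonal (fun i => (x i : ℂ)) * star u) *
        (u * Matrix.diagonal (fun i => (y i : ℂ)) * star u)
        = u * Matrix.diagonal (fun i => (x i : ℂ)) * (star u * u) *
            Matrix.diagonal (fun i => (y i : ℂ)) * star u := by noncomm_ring
      _ = _ := by rw [hu]; noncomm_ring
  rw [h, Matrix.trace_mul_cycle, ← Matrix.mul_assoc, hu, one_mul,
    Matrix.diagonal_mul_diagonal, Matrix.trace_diagonal]
  push_cast
  rfl

open Matrix in
lemma trace_conj_diag_mul {d : ℕ} {u v : Matrix (Fin d) (Fin d) ℂ} (x y : Fin d → ℝ) :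
    ((u * Matrix.diagonal (fun i => (x i : ℂ)) * star u) *
     (v * Matrix.diagonal (fun i => (y i : ℂ)) * star v)).trace
      = ((∑ i, ∑ j, x i * y j * Complex.normSq ((star u * v) i j) : ℝ) : ℂ) := by
  set W := star u * v with hW
  have hM : (u * Matrix.diagonal (fun i => (x i : ℂ)) * star u) *
      (v * Matrix.diagonal (fun i => (y i : ℂ)) * star v)
      = u * (Matrix.diagonal (fun i => (x i : ℂ)) * W *
          Matrix.diagonal (fun i => (y i : ℂ))) * star v := by
    rw [hW]; noncomm_ring
  have hsvu : star v * u = star W := by rw [hW, StarMul.star_mul, star_star]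
  rw [hM, Matrix.trace_mul_cycle, hsvu, Matrix.trace]
  push_cast
  rw [Finset.sum_comm]
  refine Finset.sum_congr rfl fun i _ => ?_
  rw [Matrix.diag_apply, Matrix.mul_apply]
  refine Finset.sum_congr rfl fun j _ => ?_
  rw [Matrix.mul_diagonal, Matrix.diagonal_mul, Matrix.star_eq_conjTranspose,
    Matrix.conjTranspose_apply, ← Complex.mul_conj]
  simp only [RCLike.star_def]
  ring

open Matrix in
lemma trace_conj_diag {d : ℕ} {u : Matrix (Fin d) (Fin d) ℂ}
    (hu : star u * u = 1) (f : Fin d → ℝ) :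
    (u * Matrix.diagonal (fun i => (f i : ℂ)) * star u).trace = ((∑ i, f i : ℝ) : ℂ) := by
  rw [Matrix.trace_mul_cycle, hu, one_mul, Matrix.trace_diagonal]
  push_cast
  rfl

open Matrix in
lemma conj_diag_combine {d : ℕ} {u : Matrix (Fin d) (Fin d) ℂ}
    (hu' : u * star u = 1) (f : Fin d → ℝ) (q s : ℝ) :
    ((q : ℝ) : ℂ) • (u * Matrix.diagonal (fun i => (f i : ℂ)) * star u) +
      ((s : ℝ) : ℂ) • (1 : Matrix (Fin d) (Fin d) ℂ)
      = u * Matrix.diagonal (fun i => ((q * f i + s : ℝ) : ℂ)) * star u := by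
  have hsmul : ∀ (c : ℂ) (D : Matrix (Fin d) (Fin d) ℂ),
      c • (u * D * star u) = u * (c • D) * star u := by
    intro c D
    rw [mul_smul_comm, smul_mul_assoc]
  have hone : (1 : Matrix (Fin d) (Fin d) ℂ)
      = u * Matrix.diagonal (fun _ => (1 : ℂ)) * star u := by
    rw [Matrix.diagonal_one, mul_one, hu']
  rw [hone, hsmul, hsmul, ← Matrix.add_mul, ← Matrix.mul_add]
  congr 2
  ext i j
  by_cases hij : i = j <;> simp [hij, Matrix.diagonal_apply] <;> push_cast <;> ring

open Matrix in
lemma supp_top_of_conj_diag_ne {d : ℕ} {v : Matrix (Fin d) (Fin d) ℂ}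
    (hv : star v * v = 1) (hv' : v * star v = 1) (g : Fin d → ℝ) (hg : ∀ j, g j ≠ 0) :
    supp (v * Matrix.diagonal (fun j => (g j : ℂ)) * star v) = ⊤ := by
  set M := v * Matrix.diagonal (fun j => (g j : ℂ)) * star v with hM
  set N := v * Matrix.diagonal (fun j => ((g j : ℂ))⁻¹) * star v with hN
  have hMN : M * N = 1 := by
    have : M * N = v * (Matrix.diagonal (fun j => (g j : ℂ)) *
        Matrix.diagonal (fun j => ((g j : ℂ))⁻¹)) * star v := by
      calc M * N = v * Matrix.diagonal (fun j => (g j : ℂ)) * (star v * v) *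
            Matrix.diagonal (fun j => ((g j : ℂ))⁻¹) * star v := by rw [hM, hN]; noncomm_ring
        _ = _ := by rw [hv]; noncomm_ring
    rw [this, Matrix.diagonal_mul_diagonal]
    have hdg : (fun j => (g j : ℂ) * ((g j : ℂ))⁻¹) = fun _ => (1 : ℂ) := by
      funext j
      exact mul_inv_cancel₀ (by exact_mod_cast hg j)
    rw [hdg, Matrix.diagonal_one, mul_one, hv']
  rw [supp, LinearMap.range_eq_top]
  intro y
  refine ⟨N *ᵥ y, ?_⟩
  rw [Matrix.mulVecLin_apply, Matrix.mulVec_mulVec, hMN, Matrix.one_mulVec]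

open Matrix in
lemma mulVec_eq_zero_of_supp_le {d : ℕ} {ρ σ : Matrix (Fin d) (Fin d) ℂ}
    (hρP : ρ.PosSemidef) (hσH : σ.IsHermitian) (hsupp : supp ρ ≤ supp σ)
    {x : Fin d → ℂ} (hx : σ *ᵥ x = 0) : ρ *ᵥ x = 0 := by
  have hmem : ρ *ᵥ x ∈ supp σ := hsupp ⟨x, rfl⟩
  obtain ⟨w, hw⟩ := hmem
  have h0 : star x ⬝ᵥ (ρ *ᵥ x) = 0 := by
    rw [← hw, Matrix.mulVecLin_apply, Matrix.dotProduct_mulVec]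
    have hvs : star x ᵥ* σ = 0 := by
      have h := congrArg star hx
      rw [Matrix.star_mulVec, hσH.eq] at h
      simpa using h
    rw [hvs, zero_dotProduct]
  exact (hρP.dotProduct_mulVec_zero_iff x).mp h0

open Matrix in
lemma normSq_row_sum {d : ℕ} {W : Matrix (Fin d) (Fin d) ℂ} (hW : W * star W = 1) (i : Fin d) :
    ∑ j, Complex.normSq (W i j) = 1 := by
  have h := congrFun (congrFun hW i) i
  rw [Matrix.mul_apply, Matrix.one_apply_eq] at h
  have h2 : ∑ j, ((Complex.normSq (W i j) : ℝ) : ℂ) = 1 := by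
    rw [← h]
    refine Finset.sum_congr rfl fun j _ => ?_
    rw [Matrix.star_eq_conjTranspose, Matrix.conjTranspose_apply, ← Complex.mul_conj]
    simp only [RCLike.star_def]
  have h3 : ((∑ j, Complex.normSq (W i j) : ℝ) : ℂ) = ((1 : ℝ) : ℂ) := by
    push_cast
    simpa using h2
  exact_mod_cast h3

open Matrix in
lemma normSq_col_sum {d : ℕ} {W : Matrix (Fin d) (Fin d) ℂ} (hW : star W * W = 1) (j : Fin d) :
    ∑ i, Complex.normSq (W i j) = 1 := by
  have h := congrFun (congrFun hW j) j
  rw [Matrix.mul_apply, Matrix.one_apply_eq] at h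
  have h2 : ∑ i, ((Complex.normSq (W i j) : ℝ) : ℂ) = 1 := by
    rw [← h]
    refine Finset.sum_congr rfl fun i _ => ?_
    rw [Matrix.star_eq_conjTranspose, Matrix.conjTranspose_apply, Complex.normSq_eq_conj_mul_self]
    simp only [RCLike.star_def]
  have h3 : ((∑ i, Complex.normSq (W i j) : ℝ) : ℂ) = ((1 : ℝ) : ℂ) := by
    push_cast
    simpa using h2
  exact_mod_cast h3

lemma sum_phi_eq {d : ℕ} (lam mu : Fin d → ℝ) (T : Fin d → Fin d → ℝ)
    (hrow : ∀ i, ∑ j, T i j = 1) (hcol : ∀ j, ∑ i, T i j = 1)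
    (hl : ∑ i, lam i = 1) (hm : ∑ j, mu j = 1) :
    (∑ i, lam i * Real.log (lam i)) - (∑ i, ∑ j, lam i * Real.log (mu j) * T i j)
      = ∑ i, ∑ j, T i j * phi (lam i) (mu j) := by
  have expand : ∀ i j, T i j * phi (lam i) (mu j)
      = T i j * (lam i * Real.log (lam i)) - lam i * Real.log (mu j) * T i j
        - T i j * lam i + T i j * mu j := by
    intro i j
    rw [phi]
    ring
  have h1 : ∀ i, ∑ j, T i j * (lam i * Real.log (lam i)) = lam i * Real.log (lam i) := by
    intro i
    rw [← Finset.sum_mul, hrow i, one_mul]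
  have h2 : ∀ i, ∑ j, T i j * lam i = lam i := by
    intro i
    rw [← Finset.sum_mul, hrow i, one_mul]
  have h3 : ∑ i, ∑ j, T i j * mu j = 1 := by
    rw [Finset.sum_comm]
    have hj : ∀ j, ∑ i, T i j * mu j = mu j := by
      intro j
      rw [← Finset.sum_mul, hcol j, one_mul]
    rw [Finset.sum_congr rfl fun j _ => hj j, hm]
  simp_rw [expand]
  simp only [Finset.sum_sub_distrib, Finset.sum_add_distrib]
  simp_rw [h1, h2]
  rw [h3, hl]
  ring

open Matrix in
/-- strong data processing inequality for the depolarizing channel, with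
contraction coefficient at most `(1-p)²/(1-((d-1)/d)p) < 1-p`. -/
theorem depolarizing_sdpi {d : ℕ} (hd : 0 < d) {p : ℝ} (hp0 : 0 < p) (hp1 : p < 1) :
    (∀ ρ σ : Matrix (Fin d) (Fin d) ℂ, IsDensity ρ → IsDensity σ →
      relEnt (depol d p ρ) (depol d p σ) ≤
        ENNReal.ofReal ((1 - p)^2 / (1 - ((d - 1 : ℝ)/d) * p)) * relEnt ρ σ) ∧
    (1 - p)^2 / (1 - ((d - 1 : ℝ)/d) * p) < 1 - p := by
  have hdR : (0:ℝ) < d := by exact_mod_cast hd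
  have hdenom : 1 - ((d - 1 : ℝ)/d) * p = (1 - p) + p / d := by
    field_simp
    ring
  constructor
  · intro ρ σ hρ hσ
    have hcoef : (1 - p)^2 / (1 - ((d - 1 : ℝ)/d) * p) = (1 - p)^2 / ((1 - p) + p / d) := by
      rw [hdenom]
    rw [hcoef]
    set q : ℝ := 1 - p with hqdef
    set s : ℝ := p / d with hsdef
    have hq : 0 < q := by rw [hqdef]; linarith
    have hs : 0 < s := div_pos hp0 hdR
    have hc0 : (0:ℝ) ≤ q^2 / (q + s) := by positivity
    have hcoef2 : q^2 = q * q := sq q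
    obtain ⟨hρP, hρtr⟩ := hρ
    obtain ⟨hσP, hσtr⟩ := hσ
    have hρH : ρ.IsHermitian := hρP.1
    have hσH : σ.IsHermitian := hσP.1
    set u : Matrix (Fin d) (Fin d) ℂ := (hρH.eigenvectorUnitary : Matrix (Fin d) (Fin d) ℂ)
      with hudef
    set v : Matrix (Fin d) (Fin d) ℂ := (hσH.eigenvectorUnitary : Matrix (Fin d) (Fin d) ℂ)
      with hvdef
    set lam := hρH.eigenvalues with hlamdef
    set mu := hσH.eigenvalues with hmudef
    have hu : star u * u = 1 := Matrix.mem_unitaryGroup_iff'.mp (hρH.eigenvectorUnitary).2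
    have hu' : u * star u = 1 := Matrix.mem_unitaryGroup_iff.mp (hρH.eigenvectorUnitary).2
    have hv : star v * v = 1 := Matrix.mem_unitaryGroup_iff'.mp (hσH.eigenvectorUnitary).2
    have hv' : v * star v = 1 := Matrix.mem_unitaryGroup_iff.mp (hσH.eigenvectorUnitary).2
    have hρeig : ρ = u * Matrix.diagonal (fun i => ((lam i : ℝ) : ℂ)) * star u :=
      hρH.spectral_theorem
    have hσeig : σ = v * Matrix.diagonal (fun j => ((mu j : ℝ) : ℂ)) * star v :=
      hσH.spectral_theorem
    have hlam0 : ∀ i, 0 ≤ lam i := hρP.eigenvalues_nonneg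
    have hmu0 : ∀ j, 0 ≤ mu j := hσP.eigenvalues_nonneg
    have hlamsum : ∑ i, lam i = 1 := by
      have h := trace_conj_diag hu lam
      rw [← hρeig, hρtr] at h
      exact_mod_cast h.symm
    have hmusum : ∑ j, mu j = 1 := by
      have h := trace_conj_diag hv mu
      rw [← hσeig, hσtr] at h
      exact_mod_cast h.symm
    have hlam1 : ∀ i, lam i ≤ 1 := by
      intro i
      rw [← hlamsum]
      exact Finset.single_le_sum (fun j _ => hlam0 j) (Finset.mem_univ i)
    have hmu1 : ∀ j, mu j ≤ 1 := by
      intro j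
      rw [← hmusum]
      exact Finset.single_le_sum (fun k _ => hmu0 k) (Finset.mem_univ j)
    set lam' : Fin d → ℝ := fun i => q * lam i + s with hlam'def
    set mu' : Fin d → ℝ := fun j => q * mu j + s with hmu'def
    have hlam'0 : ∀ i, 0 < lam' i := fun i =>
      add_pos_of_nonneg_of_pos (mul_nonneg hq.le (hlam0 i)) hs
    have hmu'0 : ∀ j, 0 < mu' j := fun j =>
      add_pos_of_nonneg_of_pos (mul_nonneg hq.le (hmu0 j)) hs
    have hds : (d : ℝ) * s = p := by
      rw [hsdef]
      field_simp
    have hlam'sum : ∑ i, lam' i = 1 := by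
      simp only [hlam'def]
      rw [Finset.sum_add_distrib, ← Finset.mul_sum, hlamsum, mul_one, Finset.sum_const,
        Finset.card_univ, Fintype.card_fin, nsmul_eq_mul, hds, hqdef]
      ring
    have hmu'sum : ∑ j, mu' j = 1 := by
      simp only [hmu'def]
      rw [Finset.sum_add_distrib, ← Finset.mul_sum, hmusum, mul_one, Finset.sum_const,
        Finset.card_univ, Fintype.card_fin, nsmul_eq_mul, hds, hqdef]
      ring
    have hdepρ : depol d p ρ = u * Matrix.diagonal (fun i => ((lam' i : ℝ) : ℂ)) * star u := by
      rw [depol, hρtr, one_smul, hρeig]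
      exact conj_diag_combine hu' lam q s
    have hdepσ : depol d p σ = v * Matrix.diagonal (fun j => ((mu' j : ℝ) : ℂ)) * star v := by
      rw [depol, hσtr, one_smul, hσeig]
      exact conj_diag_combine hv' mu q s
    set W : Matrix (Fin d) (Fin d) ℂ := star u * v with hWdef
    set T : Fin d → Fin d → ℝ := fun i j => Complex.normSq (W i j) with hTdef
    have hWW' : W * star W = 1 := by
      rw [hWdef, StarMul.star_mul, star_star]
      calc star u * v * (star v * u) = star u * (v * star v) * u := by noncomm_ring
        _ = 1 := by rw [hv', mul_one, hu]
    have hW'W : star W * W = 1 := by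
      rw [hWdef, StarMul.star_mul, star_star]
      calc star v * u * (star u * v) = star v * (u * star u) * v := by noncomm_ring
        _ = 1 := by rw [hu', mul_one, hv]
    have hrow : ∀ i, ∑ j, T i j = 1 := normSq_row_sum hWW'
    have hcol : ∀ j, ∑ i, T i j = 1 := normSq_col_sum hW'W
    have hLρ : matLog (depol d p ρ)
        = u * Matrix.diagonal (fun i => ((Real.log (lam' i) : ℝ) : ℂ)) * star u := by
      rw [hdepρ]
      exact matLog_conj_diag hu hu' lam'
    have hLσ : matLog (depol d p σ)
        = v * Matrix.diagonal (fun j => ((Real.log (mu' j) : ℝ) : ℂ)) * star v := by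
      rw [hdepσ]
      exact matLog_conj_diag hv hv' mu'
    set Aval : ℝ := (∑ i, lam' i * Real.log (lam' i))
      - (∑ i, ∑ j, lam' i * Real.log (mu' j) * T i j) with hAvaldef
    have htrL : ((depol d p ρ) * (matLog (depol d p ρ) - matLog (depol d p σ))).trace
        = ((Aval : ℝ) : ℂ) := by
      rw [Matrix.mul_sub, Matrix.trace_sub, hLρ, hLσ, hdepρ,
        trace_conj_diag_same hu lam' (fun i => Real.log (lam' i)),
        trace_conj_diag_mul lam' (fun j => Real.log (mu' j)), hAvaldef, Complex.ofReal_sub]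
    have hsuppσ' : supp (depol d p σ) = ⊤ := by
      rw [hdepσ]
      exact supp_top_of_conj_diag_ne hv hv' mu' (fun j => (hmu'0 j).ne')
    have hLHS : relEnt (depol d p ρ) (depol d p σ) = ENNReal.ofReal Aval := by
      have hle : supp (depol d p ρ) ≤ supp (depol d p σ) := by
        rw [hsuppσ']
        exact le_top
      rw [relEnt, if_pos hle, htrL, Complex.ofReal_re]
    rw [hLHS]
    by_cases hsupp : supp ρ ≤ supp σ
    · have hLρ0 : matLog ρ
          = u * Matrix.diagonal (fun i => ((Real.log (lam i) : ℝ) : ℂ)) * star u := by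
        rw [hρeig]
        exact matLog_conj_diag hu hu' lam
      have hLσ0 : matLog σ
          = v * Matrix.diagonal (fun j => ((Real.log (mu j) : ℝ) : ℂ)) * star v := by
        rw [hσeig]
        exact matLog_conj_diag hv hv' mu
      set Bval : ℝ := (∑ i, lam i * Real.log (lam i))
        - (∑ i, ∑ j, lam i * Real.log (mu j) * T i j) with hBvaldef
      have htrR : (ρ * (matLog ρ - matLog σ)).trace = ((Bval : ℝ) : ℂ) := by
        rw [Matrix.mul_sub, Matrix.trace_sub, hLρ0, hLσ0]
        nth_rewrite 1 [hρeig]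
        nth_rewrite 1 [hρeig]
        rw [trace_conj_diag_same hu lam (fun i => Real.log (lam i)),
          trace_conj_diag_mul lam (fun j => Real.log (mu j)), hBvaldef, Complex.ofReal_sub]
      have hRHS : relEnt ρ σ = ENNReal.ofReal Bval := by
        rw [relEnt, if_pos hsupp, htrR, Complex.ofReal_re]
      rw [hRHS]
      have hA : Aval = ∑ i, ∑ j, T i j * phi (lam' i) (mu' j) :=
        sum_phi_eq lam' mu' T hrow hcol hlam'sum hmu'sum
      have hB : Bval = ∑ i, ∑ j, T i j * phi (lam i) (mu j) :=
        sum_phi_eq lam mu T hrow hcol hlamsum hmusum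
      have hker : ∀ j, mu j = 0 → ∀ i, lam i = 0 ∨ W i j = 0 := by
        intro j hj i
        set x : Fin d → ℂ := ⇑(hσH.eigenvectorBasis j) with hx
        have hσx : σ *ᵥ x = 0 := by
          rw [hx, hσH.mulVec_eigenvectorBasis]
          have : mu j = hσH.eigenvalues j := rfl
          rw [← this, hj]
          simp
        have hρx : ρ *ᵥ x = 0 := mulVec_eq_zero_of_supp_le hρP hσH hsupp hσx
        have h2 : Matrix.diagonal (fun i => ((lam i : ℝ) : ℂ)) *ᵥ (star u *ᵥ x) = 0 := by
          have h3 : star u *ᵥ (ρ *ᵥ x) = 0 := by rw [hρx, Matrix.mulVec_zero]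
          rw [hρeig, Matrix.mulVec_mulVec] at h3
          have h4 : star u * (u * Matrix.diagonal (fun i => ((lam i : ℝ) : ℂ)) * star u)
              = Matrix.diagonal (fun i => ((lam i : ℝ) : ℂ)) * star u := by
            calc star u * (u * Matrix.diagonal (fun i => ((lam i : ℝ) : ℂ)) * star u)
                = (star u * u) * Matrix.diagonal (fun i => ((lam i : ℝ) : ℂ)) * star u := by
                  noncomm_ring
              _ = _ := by rw [hu, one_mul]
          rw [h4] at h3
          rw [← Matrix.mulVec_mulVec] at h3
          exact h3
        have h5 : (lam i : ℂ) * (star u *ᵥ x) i = 0 := by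
          have h := congrFun h2 i
          rwa [Matrix.mulVec_diagonal] at h
        have hxv : x = fun k => v k j := by
          funext k
          rw [hx, hvdef]
          exact (Matrix.IsHermitian.eigenvectorUnitary_apply hσH k j).symm
        have h6 : (star u *ᵥ x) i = W i j := by
          rw [hxv, hWdef, Matrix.mul_apply]
          simp [Matrix.mulVec, dotProduct]
        rw [h6] at h5
        rcases mul_eq_zero.mp h5 with h | h
        · left
          exact_mod_cast h
        · right
          exact h
      rw [← ENNReal.ofReal_mul hc0]
      apply ENNReal.ofReal_le_ofReal
      rw [hA, hB, Finset.mul_sum]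
      refine Finset.sum_le_sum fun i _ => ?_
      rw [Finset.mul_sum]
      refine Finset.sum_le_sum fun j _ => ?_
      have hT0 : (0:ℝ) ≤ T i j := Complex.normSq_nonneg _
      rcases eq_or_lt_of_le (hmu0 j) with hmuj | hmuj
      · rcases hker j hmuj.symm i with hl0 | hw0
        · have e1 : phi (lam' i) (mu' j) = 0 := by
            have he : lam' i = mu' j := by
              simp only [hlam'def, hmu'def]
              rw [hl0, ← hmuj]
            rw [he, phi_self]
          have e2 : phi (lam i) (mu j) = 0 := by
            rw [hl0, ← hmuj, phi_self]
          simp [e1, e2]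
        · have hT : T i j = 0 := by
            simp only [hTdef]
            rw [hw0]
            simp
          simp [hT]
      · have hsc := scalar_sdpi hq hs (hlam0 i) (hlam1 i) hmuj (hmu1 j)
        calc T i j * phi (lam' i) (mu' j) ≤ T i j * (q ^ 2 / (q + s) * phi (lam i) (mu j)) :=
            mul_le_mul_of_nonneg_left hsc hT0
          _ = q ^ 2 / (q + s) * (T i j * phi (lam i) (mu j)) := by ring
    · rw [relEnt, if_neg hsupp]
      have hne : ENNReal.ofReal (q ^ 2 / (q + s)) ≠ 0 := by
        have hpos : (0:ℝ) < q ^ 2 / (q + s) := by positivity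
        exact (ENNReal.ofReal_pos.mpr hpos).ne'
      rw [ENNReal.mul_top hne]
      exact le_top
  · rw [hdenom, div_lt_iff₀ (by nlinarith [div_pos hp0 hdR])]
    nlinarith [mul_pos (by linarith : (0:ℝ) < 1 - p) (div_pos hp0 hdR)]

end RDPI
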